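/- Let d ≥ 1, k ≥ 1, N = C(d+k,d), and let m₁,...,m_N ∈ ℕ^d be multi-indices such that for some coordinate i the sum ∑_{j=1}^N m_j^i is strictly less than kN/(d+1). Then the generalised Vandermonde determinant det Van_d^k(m₁,...,m_N) = 0. -/
import Mathlib

open Finset

/-- Stirling-like coefficients expressing powers in descending factorials. -/
def stir : ℕ → ℕ → ℚ
  | 0, 0 => 1
  | 0, _+1 => 0
  | _+1, 0 => 0
  | a+1, b+1 => (b+1) * stir a (b+1) + stir a b

lemma stir_eq_zero : ∀ {a b : ℕ}, a < b → stir a b = 0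
  | 0, _+1, _ => rfl
  | a+1, b+1, h => by
      rw [stir, stir_eq_zero (by omega), stir_eq_zero (by omega)]
      ring

lemma desc_step (m b : ℕ) :
    (m : ℚ) * (Nat.descFactorial m b : ℚ)
      = (Nat.descFactorial m (b+1) : ℚ) + b * (Nat.descFactorial m b : ℚ) := by
  rcases le_or_gt b m with h | h
  · rw [Nat.descFactorial_succ]
    push_cast [Nat.cast_sub h]
    ring
  · rw [Nat.descFactorial_eq_zero_iff_lt.mpr h,
        Nat.descFactorial_eq_zero_iff_lt.mpr (by omega)]
    simp

lemma pow_eq_sum_stir (m : ℕ) : ∀ a : ℕ,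
    (m : ℚ) ^ a = ∑ b ∈ Finset.range (a+1), stir a b * (Nat.descFactorial m b : ℚ)
  | 0 => by simp [stir]
  | a+1 => by
      have ih := pow_eq_sum_stir m a
      rw [pow_succ, mul_comm, ih, Finset.mul_sum]
      have step : ∑ b ∈ Finset.range (a+1),
            (m:ℚ) * (stir a b * (Nat.descFactorial m b : ℚ))
          = ∑ b ∈ Finset.range (a+1),
            (stir a b * (Nat.descFactorial m (b+1) : ℚ)
              + b * stir a b * (Nat.descFactorial m b : ℚ)) := by
        refine Finset.sum_congr rfl fun b _ => ?_
        linear_combination stir a b * desc_step m b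
      rw [step, Finset.sum_add_distrib]
      rw [Finset.sum_range_succ' (fun b => stir (a+1) b * (Nat.descFactorial m b : ℚ)) (a+1)]
      have h0 : stir (a+1) 0 * (Nat.descFactorial m 0 : ℚ) = 0 := by simp [stir]
      rw [h0, add_zero]
      have hrw : ∀ b, stir (a+1) (b+1) = (b+1) * stir a (b+1) + stir a b := fun b => rfl
      have key : ∑ b ∈ Finset.range (a+1), (b:ℚ) * stir a b * (Nat.descFactorial m b : ℚ)
          = ∑ b ∈ Finset.range (a+1), ((b:ℚ)+1) * stir a (b+1) * (Nat.descFactorial m (b+1) : ℚ) := by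
        rw [Finset.sum_range_succ' (fun b => (b:ℚ) * stir a b * (Nat.descFactorial m b : ℚ)) a]
        rw [Finset.sum_range_succ (fun b => ((b:ℚ)+1) * stir a (b+1) * (Nat.descFactorial m (b+1) : ℚ)) a]
        rw [stir_eq_zero (Nat.lt_succ_self a)]
        simp
      rw [key, ← Finset.sum_add_distrib]
      refine Finset.sum_congr rfl fun b _ => ?_
      rw [hrw b]
      ring

theorem stmt14 (d k : ℕ) (hd : 1 ≤ d) (hk : 1 ≤ k)
    (N : ℕ) (hN : N = Nat.choose (d + k) d)
    (r : Fin N → Fin d → ℕ) (hinj : Function.Injective r)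
    (hcomp : ∀ v : Fin d → ℕ, (∑ i, v i) ≤ k ↔ ∃ j, r j = v)
    (S : ℕ) (hS : S * (d + 1) = k * N)
    (m : Fin N → Fin d → ℕ)
    (i : Fin d) (hdef : (∑ j, m j i) < S) :
    Matrix.det (Matrix.of fun j n : Fin N => ∏ i, ((m n i : ℚ)) ^ (r j i)) = 0 := by
  classical
  have hrk : ∀ j, (∑ t, r j t) ≤ k := fun j => (hcomp (r j)).mpr ⟨j, rfl⟩
  -- Step 1: all coordinate sums are equal
  have hswap : ∀ i' : Fin d, (∑ j, r j i') = ∑ j, r j i := by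
    intro i'
    have hex : ∀ j, ∃ j', r j' = fun t => r j (Equiv.swap i i' t) := by
      intro j
      apply (hcomp _).mp
      rw [Equiv.sum_comp (Equiv.swap i i') (r j)]
      exact hrk j
    choose σ hσ using hex
    have hσinj : Function.Injective σ := by
      intro a b hab
      apply hinj
      funext u
      have h1 := congrFun (hσ a) (Equiv.swap i i' u)
      have h2 := congrFun (hσ b) (Equiv.swap i i' u)
      rw [hab] at h1
      have := h1.symm.trans h2
      simpa using this
    have hσbij : Function.Bijective σ := Finite.injective_iff_bijective.mp hσinj
    calc ∑ j, r j i' = ∑ j, r (σ j) i' := (Function.Bijective.sum_comp hσbij _).symm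
    _ = ∑ j, r j i := by
        refine Finset.sum_congr rfl fun j _ => ?_
        rw [hσ j]
        simp
  -- Step 2: slack symmetry
  have hle : ∀ j, r j i ≤ ∑ t, r j t := fun j =>
    Finset.single_le_sum (fun t _ => Nat.zero_le _) (Finset.mem_univ i)
  have hsumupd : ∀ j, (∑ t, Function.update (r j) i (k - ∑ t, r j t) t)
      = k - r j i := by
    intro j
    rw [Finset.sum_update_of_mem (Finset.mem_univ i)]
    have : ∑ t ∈ Finset.univ \ {i}, r j t = (∑ t, r j t) - r j i := by
      have := Finset.sum_sdiff (Finset.singleton_subset_iff.mpr (Finset.mem_univ i))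
        (f := r j)
      simp only [Finset.sum_singleton] at this
      omega
    rw [this]
    have h1 := hrk j
    have h2 := hle j
    omega
  have hex2 : ∀ j, ∃ j', r j' = Function.update (r j) i (k - ∑ t, r j t) := by
    intro j
    apply (hcomp _).mp
    rw [hsumupd j]
    omega
  choose τ hτ using hex2
  have hτval : ∀ j, r (τ j) i = k - ∑ t, r j t := by
    intro j
    rw [hτ j]
    simp
  have hττ : ∀ j, τ (τ j) = j := by
    intro j
    apply hinj
    rw [hτ (τ j), hτ j]
    funext u
    rcases eq_or_ne u i with rfl | hu
    · simp only [Function.update_self]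
      rw [hsumupd j]
      have h1 := hrk j
      have h2 := hle j
      omega
    · simp [Function.update_of_ne hu]
  have hτinj : Function.Injective τ := Function.LeftInverse.injective hττ
  have hτbij : Function.Bijective τ := Finite.injective_iff_bijective.mp hτinj
  have hslack : (∑ j, (k - ∑ t, r j t)) = ∑ j, r j i := by
    calc ∑ j, (k - ∑ t, r j t) = ∑ j, r (τ j) i := by
          refine Finset.sum_congr rfl fun j _ => (hτval j).symm
    _ = ∑ j, r j i := Function.Bijective.sum_comp hτbij (fun j => r j i)
  -- Step 3: ∑ j, r j i = S
  have hcS : (∑ j, r j i) = S := by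
    have htot : ∑ j : Fin N, k = k * N := by
      simp [Finset.sum_const, Nat.smul_one_eq_cast, mul_comm]
    have hsplit : ∑ j : Fin N, k
        = (∑ j, (k - ∑ t, r j t)) + ∑ j, ∑ t, r j t := by
      rw [← Finset.sum_add_distrib]
      refine Finset.sum_congr rfl fun j _ => ?_
      have := hrk j
      omega
    have hcomm : (∑ j, ∑ t, r j t) = ∑ t : Fin d, ∑ j, r j t := by rw [Finset.sum_comm]
    have hall : (∑ t : Fin d, ∑ j, r j t) = d * ∑ j, r j i := by
      rw [Finset.sum_congr rfl fun t _ => hswap t]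
      simp [Finset.sum_const, mul_comm]
    have : (∑ j, r j i) * (d + 1) = k * N := by
      rw [← htot, hsplit, hslack, hcomm, hall]
      ring
    have := this.trans hS.symm
    exact Nat.eq_of_mul_eq_mul_right (by omega) this
  -- Matrix decomposition
  set A : Matrix (Fin N) (Fin N) ℚ :=
    Matrix.of fun j n : Fin N => ∏ i, ((m n i : ℚ)) ^ (r j i) with hA
  set B : Matrix (Fin N) (Fin N) ℚ :=
    Matrix.of fun j n : Fin N => ∏ i, ((Nat.descFactorial (m n i) (r j i) : ℚ)) with hB
  set C : Matrix (Fin N) (Fin N) ℚ :=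
    Matrix.of fun j j' : Fin N => ∏ i, stir (r j i) (r j' i) with hC
  have hAB : A = C * B := by
    ext j n
    rw [Matrix.mul_apply]
    have expand : ∀ j' : Fin N, C j j' * B j' n
        = ∏ t, (stir (r j t) (r j' t) * (Nat.descFactorial (m n t) (r j' t) : ℚ)) := by
      intro j'
      simp only [hB, hC, Matrix.of_apply]
      rw [Finset.prod_mul_distrib]
    simp only [expand]
    have h1 : ∑ j' : Fin N, ∏ t, (stir (r j t) (r j' t) * (Nat.descFactorial (m n t) (r j' t) : ℚ)) = ∑ v ∈ Finset.image r Finset.univ, ∏ t, (stir (r j t) (v t) * (Nat.descFactorial (m n t) (v t) : ℚ)) :=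
      (Finset.sum_image (f := fun v => ∏ t, (stir (r j t) (v t) * (Nat.descFactorial (m n t) (v t) : ℚ))) (fun a _ b _ h => hinj h)).symm
    have hsub : Fintype.piFinset (fun t => Finset.range (r j t + 1))
        ⊆ Finset.image r Finset.univ := by
      intro v hv
      rw [Fintype.mem_piFinset] at hv
      have hvle : ∀ t, v t ≤ r j t := fun t => by
        have := hv t; rw [Finset.mem_range] at this; omega
      have : (∑ t, v t) ≤ k :=
        le_trans (Finset.sum_le_sum fun t _ => hvle t) (hrk j)
      obtain ⟨j', hj'⟩ := (hcomp v).mp this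
      exact Finset.mem_image.mpr ⟨j', Finset.mem_univ _, hj'⟩
    have h2 : ∑ v ∈ Finset.image r Finset.univ, ∏ t, (stir (r j t) (v t) * (Nat.descFactorial (m n t) (v t) : ℚ))
        = ∑ v ∈ Fintype.piFinset (fun t => Finset.range (r j t + 1)), ∏ t, (stir (r j t) (v t) * (Nat.descFactorial (m n t) (v t) : ℚ)) := by
      refine (Finset.sum_subset hsub ?_).symm
      intro v hv hnv
      rw [Fintype.mem_piFinset] at hnv
      push_neg at hnv
      obtain ⟨t, ht⟩ := hnv
      rw [Finset.mem_range, not_lt] at ht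
      refine Finset.prod_eq_zero (Finset.mem_univ t) ?_
      rw [stir_eq_zero (by omega)]
      ring
    have h3 : ∑ v ∈ Fintype.piFinset (fun t => Finset.range (r j t + 1)), ∏ t, (stir (r j t) (v t) * (Nat.descFactorial (m n t) (v t) : ℚ))
        = ∏ t, ∑ b ∈ Finset.range (r j t + 1),
            (stir (r j t) b * (Nat.descFactorial (m n t) b : ℚ)) :=
      (Finset.prod_univ_sum (fun t => Finset.range (r j t + 1)) (fun t b => stir (r j t) b * (Nat.descFactorial (m n t) b : ℚ))).symm
    rw [h1, h2, h3, hA]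
    simp only [Matrix.of_apply]
    refine Finset.prod_congr rfl fun t _ => ?_
    exact pow_eq_sum_stir (m n t) (r j t)
  have hBdet : B.det = 0 := by
    rw [Matrix.det_apply]
    refine Finset.sum_eq_zero fun σ _ => ?_
    have hprod : (∏ n, B (σ n) n) = 0 := by
      by_contra h
      have hne : ∀ n : Fin N, ∀ t : Fin d,
          ((Nat.descFactorial (m n t) (r (σ n) t) : ℚ)) ≠ 0 := by
        intro n t
        have hn := Finset.prod_ne_zero_iff.mp h n (Finset.mem_univ n)
        simp only [hB, Matrix.of_apply] at hn
        exact Finset.prod_ne_zero_iff.mp hn t (Finset.mem_univ t)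
      have hle2 : ∀ n : Fin N, r (σ n) i ≤ m n i := by
        intro n
        have := hne n i
        rw [Nat.cast_ne_zero] at this
        have := Nat.descFactorial_eq_zero_iff_lt.not.mp this
        omega
      have : (∑ n, r (σ n) i) ≤ ∑ n, m n i := Finset.sum_le_sum fun n _ => hle2 n
      rw [Equiv.sum_comp σ (fun j => r j i)] at this
      omega
    rw [hprod]
    simp
  rw [hAB, Matrix.det_mul, hBdet, mul_zero]
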